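/- Let Γ be a free group on countably many generators, d ≥ 2, G a subgroup of the symmetric group Π_d acting transitively on {1,…,d}, and μ the product probability measure on Hom(Γ, G). Then the set of h ∈ Hom(Γ, G) whose image h(Γ) does not act transitively on {1,…,d} has μ-measure zero. -/

import Mathlib

open MeasureTheory

/-- The σ-algebra on `Hom(FreeGroup ℕ, G)` generated by pointwise evaluation,
with `G` carrying the discrete σ-algebra. -/
noncomputable instance homMS (G : Type) [Group G] :
    MeasurableSpace (FreeGroup ℕ →* G) :=
  MeasurableSpace.comap (fun f => (f : FreeGroup ℕ → G))
    (@MeasurableSpace.pi (FreeGroup ℕ) (fun _ => G) (fun _ => ⊤))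

/-- Let `Γ` be a free group on countably many generators, `d ≥ 2`, `G` a subgroup of the
symmetric group on `{1,…,d}` acting transitively, and `μ` the product probability measure
on `Hom(Γ, G)` (giving each cylinder set on `k` distinct generators measure `1/|G|^k`).
Then the set of `h` whose image does not act transitively on `{1,…,d}` has `μ`-measure 0. -/
theorem stmt4 (d : ℕ) (hd : 2 ≤ d) (G : Subgroup (Equiv.Perm (Fin d)))
    (hG : ∀ i j : Fin d, ∃ g ∈ G, g i = j)
    (μ : Measure (FreeGroup ℕ →* G)) [IsProbabilityMeasure μ]
    (hcyl : ∀ (s : Finset ℕ) (σ : ℕ → G),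
      μ {h : FreeGroup ℕ →* G | ∀ i ∈ s, h (FreeGroup.of i) = σ i}
        = ((Nat.card G : ENNReal))⁻¹ ^ s.card) :
    μ {h : FreeGroup ℕ →* G |
        ¬ ∀ i j : Fin d, ∃ x : FreeGroup ℕ, ((h x : Equiv.Perm (Fin d))) i = j} = 0 := by
  classical
  have hN0 : Nat.card G ≠ 0 := Nat.card_pos.ne'
  -- key: for fixed i j, the set of h never mapping i to j is null
  have key : ∀ i j : Fin d,
      μ {h : FreeGroup ℕ →* G |
        ∀ x : FreeGroup ℕ, ((h x : Equiv.Perm (Fin d))) i ≠ j} = 0 := by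
    intro i j
    obtain ⟨g0, hg0G, hg0⟩ := hG i j
    set T := {g : G // ((g : Equiv.Perm (Fin d))) i ≠ j} with hT
    have hTlt : Fintype.card T < Nat.card G := by
      rw [Nat.card_eq_fintype_card]
      exact Fintype.card_subtype_lt (x := (⟨g0, hg0G⟩ : G))
        (by simpa using hg0)
    set B := {h : FreeGroup ℕ →* G |
        ∀ x : FreeGroup ℕ, ((h x : Equiv.Perm (Fin d))) i ≠ j} with hB
    -- for each k, bound μ B
    have hbound : ∀ k : ℕ,
        μ B ≤ ((Fintype.card T : ENNReal) * ((Nat.card G : ENNReal))⁻¹) ^ k := by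
      intro k
      set ext : (Fin k → T) → ℕ → G := fun σ n =>
        if hn : n < k then (σ ⟨n, hn⟩ : G) else 1 with hext
      have hsub : B ⊆ ⋃ σ : Fin k → T,
          {h : FreeGroup ℕ →* G | ∀ n ∈ Finset.range k, h (FreeGroup.of n) = ext σ n} := by
        intro h hh
        refine Set.mem_iUnion.2 ⟨fun m => ⟨h (FreeGroup.of m), hh _⟩, ?_⟩
        intro n hn
        rw [Finset.mem_range] at hn
        simp [hext, hn]
      calc μ B ≤ μ (⋃ σ : Fin k → T,
          {h : FreeGroup ℕ →* G | ∀ n ∈ Finset.range k, h (FreeGroup.of n) = ext σ n}) :=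
            measure_mono hsub
        _ ≤ ∑' σ : Fin k → T, μ {h : FreeGroup ℕ →* G |
              ∀ n ∈ Finset.range k, h (FreeGroup.of n) = ext σ n} := measure_iUnion_le _
        _ = ∑' _σ : Fin k → T, ((Nat.card G : ENNReal))⁻¹ ^ k := by
            congr 1; funext σ
            simpa using hcyl (Finset.range k) (ext σ)
        _ = (Fintype.card (Fin k → T) : ENNReal) * ((Nat.card G : ENNReal))⁻¹ ^ k := by
            rw [tsum_fintype, Finset.sum_const, Finset.card_univ, nsmul_eq_mul]
        _ = ((Fintype.card T : ENNReal) * ((Nat.card G : ENNReal))⁻¹) ^ k := by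
            rw [Fintype.card_fun, Fintype.card_fin, mul_pow]
            push_cast
            ring
    -- the bound tends to 0
    have hlt1 : (Fintype.card T : ENNReal) * ((Nat.card G : ENNReal))⁻¹ < 1 := by
      rw [mul_comm, ← ENNReal.div_eq_inv_mul,
        ENNReal.div_lt_iff (Or.inl (by exact_mod_cast hN0)) (Or.inl (by simp)), one_mul]
      exact_mod_cast hTlt
    have htend := ENNReal.tendsto_pow_atTop_nhds_zero_of_lt_one hlt1
    exact le_antisymm (ge_of_tendsto' htend hbound) zero_le
  -- conclude
  have hsub : {h : FreeGroup ℕ →* G |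
        ¬ ∀ i j : Fin d, ∃ x : FreeGroup ℕ, ((h x : Equiv.Perm (Fin d))) i = j}
      ⊆ ⋃ i : Fin d, ⋃ j : Fin d, {h : FreeGroup ℕ →* G |
        ∀ x : FreeGroup ℕ, ((h x : Equiv.Perm (Fin d))) i ≠ j} := by
    intro h hh
    simp only [Set.mem_setOf_eq] at hh
    push_neg at hh
    obtain ⟨i, j, hij⟩ := hh
    exact Set.mem_iUnion.2 ⟨i, Set.mem_iUnion.2 ⟨j, hij⟩⟩
  refine measure_mono_null hsub ?_
  exact measure_iUnion_null fun i => measure_iUnion_null fun j => key i j
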